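/- There does not exist a complex d×n equiangular tight frame with d² − d + 1 < n < d². -/

import Mathlib

open Matrix

private lemma trace_mul_vecMulVec {d : ℕ} (A : Matrix (Fin d) (Fin d) ℂ) (a b : Fin d → ℂ) :
    Matrix.trace (A * Matrix.vecMulVec a b) = b ⬝ᵥ (A *ᵥ a) := by
  simp only [Matrix.trace, Matrix.mul_apply, Matrix.vecMulVec_apply, Matrix.diag,
    dotProduct, Matrix.mulVec, Finset.mul_sum]
  congr 1; ext i; congr 1; ext j; ring

private lemma sandwich_vecMulVec {d n : ℕ} (X : Matrix (Fin d) (Fin n) ℂ) (a b : Fin d → ℂ)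
    (l l' : Fin n) :
    (Xᴴ * Matrix.vecMulVec a b * X) l l' = (Xᴴ *ᵥ a) l * (b ᵥ* X) l' := by
  simp only [Matrix.mul_apply, Matrix.vecMulVec_apply, Matrix.mulVec, Matrix.vecMul,
    dotProduct, Finset.sum_mul, Finset.mul_sum]
  congr 1; ext i; congr 1; ext j; ring

private lemma vecMulVec_mul_vecMulVec' {d : ℕ} (a b c e : Fin d → ℂ) :
    Matrix.vecMulVec a b * Matrix.vecMulVec c e = (b ⬝ᵥ c) • Matrix.vecMulVec a e := by
  ext i j
  simp only [Matrix.mul_apply, Matrix.vecMulVec_apply, Matrix.smul_apply, dotProduct,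
    Finset.sum_mul, Finset.mul_sum, smul_eq_mul]
  congr 1; ext k; ring

private lemma trace_vecMulVec' {d : ℕ} (a b : Fin d → ℂ) :
    Matrix.trace (Matrix.vecMulVec a b) = b ⬝ᵥ a := by
  simp [Matrix.trace, Matrix.vecMulVec_apply, dotProduct, Matrix.diag, mul_comm]

private lemma dot_star_swap {d : ℕ} (u w : Fin d → ℂ) :
    star w ⬝ᵥ u = star (star u ⬝ᵥ w) := by
  simp [dotProduct, Pi.star_apply, mul_comm]

/-- `X` is a complex `d × n` equiangular tight frame: there exist `α, β > 0` such that
every diagonal entry of `XᴴX` equals `1`, the absolute value of every off-diagonal entry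
of `XᴴX` equals `α`, and `XXᴴ = β I`. -/
def IsETF {d n : ℕ} (X : Matrix (Fin d) (Fin n) ℂ) : Prop :=
  ∃ α β : ℝ, 0 < α ∧ 0 < β ∧
    (∀ j, (Xᴴ * X) j j = 1) ∧
    (∀ j k, j ≠ k → ‖(Xᴴ * X) j k‖ = α) ∧
    X * Xᴴ = (β : ℂ) • (1 : Matrix (Fin d) (Fin d) ℂ)

set_option maxHeartbeats 2000000 in
/-- There does not exist a complex `d × n` equiangular tight frame with
`d² − d + 1 < n < d²`. -/
theorem singer_zauner_gap :
    ¬ ∃ (d n : ℕ) (X : Matrix (Fin d) (Fin n) ℂ),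
      IsETF X ∧ d ^ 2 - d + 1 < n ∧ n < d ^ 2 := by
  rintro ⟨d, n, X, ⟨α, β, hα, hβ, hdiag, hoff, hXX⟩, hlow, hupp⟩
  -- numeric bounds
  have hd3 : 3 ≤ d := by
    by_contra h
    push_neg at h
    interval_cases d <;> norm_num at hlow hupp <;> omega
  have hdd : d ^ 2 = d * d := sq d
  rw [hdd] at hlow hupp
  have h3d : 3 * d ≤ d * d := Nat.mul_le_mul hd3 (le_refl d)
  have hn8 : 8 ≤ n := by omega
  have hn0 : 0 < n := by omega
  have hd0 : 0 < d := by omega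
  set j₀ : Fin n := ⟨0, hn0⟩ with hj₀def
  set G := Xᴴ * X with hG
  have hGherm : ∀ l k, G k l = star (G l k) := by
    intro l k
    have hh : Gᴴ = G := by rw [hG, conjTranspose_mul, conjTranspose_conjTranspose]
    conv_lhs => rw [← hh]
    simp [Matrix.conjTranspose_apply]
  have hGsq : G * G = (β : ℂ) • G := by
    rw [hG]
    calc Xᴴ * X * (Xᴴ * X) = Xᴴ * (X * Xᴴ) * X := by
          simp only [Matrix.mul_assoc]
      _ = Xᴴ * ((β : ℂ) • (1 : Matrix (Fin d) (Fin d) ℂ)) * X := by rw [hXX]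
      _ = (β : ℂ) • (Xᴴ * X) := by
          rw [Matrix.mul_smul, Matrix.mul_one, Matrix.smul_mul]
  have htrG : Matrix.trace G = (n : ℂ) := by
    simp [Matrix.trace, Matrix.diag, hdiag]
  have hβdC : (β : ℂ) * d = n := by
    have h1 : Matrix.trace (X * Xᴴ) = (β : ℂ) * d := by
      rw [hXX, Matrix.trace_smul, Matrix.trace_one]
      simp [smul_eq_mul]
    rw [← h1, Matrix.trace_mul_comm, ← hG, htrG]
  set a : ℝ := α ^ 2 with hadef
  have hoffC : ∀ l k, l ≠ k → G l k * star (G l k) = (a : ℂ) := by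
    intro l k hlk
    have h1 : ‖G l k‖ = α := hoff l k hlk
    rw [Complex.star_def, Complex.mul_conj, ← Complex.sq_norm, h1]
  have hrow : (1 : ℂ) + ((n : ℂ) - 1) * (a : ℂ) = (β : ℂ) := by
    have h1 : (G * G) j₀ j₀ = (β : ℂ) := by
      rw [hGsq]
      simp [Matrix.smul_apply, hdiag j₀, smul_eq_mul]
    rw [Matrix.mul_apply] at h1
    have h2 : ∑ k, G j₀ k * G k j₀ = ∑ k, G j₀ k * star (G j₀ k) :=
      Finset.sum_congr rfl (fun k _ => by rw [hGherm j₀ k])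
    rw [h2, ← Finset.add_sum_erase _ _ (Finset.mem_univ j₀)] at h1
    have h3 : ∑ k ∈ Finset.univ.erase j₀, G j₀ k * star (G j₀ k)
        = ((n - 1 : ℕ) : ℂ) * (a : ℂ) := by
      rw [Finset.sum_congr rfl
        (fun k hk => hoffC j₀ k (Ne.symm (Finset.mem_erase.mp hk).1))]
      rw [Finset.sum_const, Finset.card_erase_of_mem (Finset.mem_univ j₀),
        Finset.card_univ, Fintype.card_fin]
      simp [nsmul_eq_mul]
    rw [h3, hdiag j₀] at h1
    rw [← h1]
    have : ((n - 1 : ℕ) : ℂ) = (n : ℂ) - 1 := by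
      push_cast [Nat.cast_sub (by omega : 1 ≤ n)]
      ring
    rw [this]
    simp
  -- real versions and positivity
  have hβd : β * (d : ℝ) = n := by exact_mod_cast hβdC
  have hrowR : 1 + ((n : ℝ) - 1) * a = β := by exact_mod_cast hrow
  have ha0 : 0 < a := by positivity
  have hd3' : (3 : ℝ) ≤ d := by exact_mod_cast hd3
  have hn8' : (8 : ℝ) ≤ n := by exact_mod_cast hn8
  have h3β : 3 * β ≤ n := by nlinarith
  have hβn : β < n := by nlinarith
  have ha1 : a < 1 := by nlinarith
  have h1a : (0 : ℝ) < 1 - a := by linarith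
  have hβC0 : (β : ℂ) ≠ 0 := by
    exact_mod_cast hβ.ne'
  have h1aC0 : ((1 : ℂ) - (a : ℂ)) ≠ 0 := by
    have : ((1 : ℂ) - (a : ℂ)) = ((1 - a : ℝ) : ℂ) := by push_cast; ring
    rw [this]
    exact_mod_cast h1a.ne'
  have haC0 : ((a : ℝ) : ℂ) ≠ 0 := by exact_mod_cast ha0.ne'
  -- the evaluation linear map
  let Tmap : Matrix (Fin d) (Fin d) ℂ →ₗ[ℂ] (Fin n → ℂ) :=
    { toFun := fun A => fun l => (Xᴴ * A * X) l l
      map_add' := by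
        intro A B; funext l
        simp [Matrix.mul_add, Matrix.add_mul]
      map_smul' := by
        intro c A; funext l
        simp [Matrix.mul_smul, Matrix.smul_mul] }
  have hTapp : ∀ (A : Matrix (Fin d) (Fin d) ℂ) (l : Fin n),
      Tmap A l = (Xᴴ * A * X) l l := fun _ _ => rfl
  -- the Gram matrix of the outer products and its explicit inverse
  set Jm : Matrix (Fin n) (Fin n) ℂ := Matrix.of (fun _ _ => (1 : ℂ)) with hJmdef
  set Φm : Matrix (Fin n) (Fin n) ℂ := Matrix.of (fun l k => G l k * G k l) with hΦmdef
  set Mm : Matrix (Fin n) (Fin n) ℂ :=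
    (β : ℂ) • (1 : Matrix (Fin n) (Fin n) ℂ) - (a : ℂ) • Jm with hMmdef
  have hΦdiag : ∀ l, Φm l l = 1 := by
    intro l
    simp [hΦmdef, hdiag l]
  have hΦoff : ∀ l k, l ≠ k → Φm l k = (a : ℂ) := by
    intro l k hlk
    have := hoffC l k hlk
    simp only [hΦmdef, Matrix.of_apply]
    rw [hGherm l k]
    exact this
  have hΦrow : ∀ l, ∑ k, Φm l k = (β : ℂ) := by
    intro l
    rw [← Finset.add_sum_erase _ _ (Finset.mem_univ l), hΦdiag l]
    have h3 : ∑ k ∈ Finset.univ.erase l, Φm l k = ((n - 1 : ℕ) : ℂ) * (a : ℂ) := by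
      rw [Finset.sum_congr rfl
        (fun k hk => hΦoff l k (Ne.symm (Finset.mem_erase.mp hk).1))]
      rw [Finset.sum_const, Finset.card_erase_of_mem (Finset.mem_univ l),
        Finset.card_univ, Fintype.card_fin]
      simp [nsmul_eq_mul]
    rw [h3]
    have hc : ((n - 1 : ℕ) : ℂ) = (n : ℂ) - 1 := by
      push_cast [Nat.cast_sub (by omega : 1 ≤ n)]; ring
    rw [hc, ← hrow]
  have hΦM : Φm * Mm = (((1 : ℂ) - (a : ℂ)) * (β : ℂ)) • (1 : Matrix (Fin n) (Fin n) ℂ) := by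
    ext l k
    rw [Matrix.mul_apply]
    have hentry : ∀ j, Φm l j * Mm j k
        = (if j = k then (β : ℂ) * Φm l j else 0) - (a : ℂ) * Φm l j := by
      intro j
      simp only [hMmdef, Matrix.sub_apply, Matrix.smul_apply, Matrix.one_apply,
        hJmdef, Matrix.of_apply, smul_eq_mul]
      by_cases h : j = k <;> simp [h] <;> ring
    rw [Finset.sum_congr rfl (fun j _ => hentry j), Finset.sum_sub_distrib,
      Finset.sum_ite_eq' Finset.univ k (fun j => (β : ℂ) * Φm l j)]
    rw [← Finset.mul_sum, hΦrow l]
    by_cases h : l = k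
    · subst h
      simp [hΦdiag l]
      ring
    · rw [hΦoff l k h]
      have hkl : ¬ (k = l) := fun hh => h hh.symm
      simp only [Matrix.smul_apply, Matrix.one_apply_ne h, smul_eq_mul, mul_zero]
      by_cases hkk : k = k
      · simp
        ring
      · exact absurd rfl hkk
  have hTdiag : ∀ c : Fin n → ℂ, Tmap (X * Matrix.diagonal c * Xᴴ) = Φm *ᵥ c := by
    intro c; funext l
    rw [hTapp]
    have hs : Xᴴ * (X * Matrix.diagonal c * Xᴴ) * X = G * Matrix.diagonal c * G := by
      rw [hG]; simp only [Matrix.mul_assoc]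
    rw [hs, Matrix.mul_apply]
    simp only [Matrix.mul_diagonal]
    rw [Matrix.mulVec]
    simp only [hΦmdef, Matrix.of_apply, dotProduct]
    exact Finset.sum_congr rfl (fun k _ => by ring)
  have hc0 : ((1 : ℂ) - (a : ℂ)) * (β : ℂ) ≠ 0 := mul_ne_zero h1aC0 hβC0
  have hTsurj : Function.Surjective Tmap := by
    intro w
    refine ⟨X * Matrix.diagonal ((((1 : ℂ) - (a : ℂ)) * (β : ℂ))⁻¹ • (Mm *ᵥ w)) * Xᴴ, ?_⟩
    rw [hTdiag, Matrix.mulVec_smul, Matrix.mulVec_mulVec, hΦM, Matrix.smul_mulVec,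
      Matrix.one_mulVec, smul_smul, inv_mul_cancel₀ hc0, one_smul]
  have hrange : LinearMap.range Tmap = ⊤ := LinearMap.range_eq_top.mpr hTsurj
  have hrank := LinearMap.finrank_range_add_finrank_ker Tmap
  rw [hrange, finrank_top] at hrank
  have hfr1 : Module.finrank ℂ (Fin n → ℂ) = n := by
    simp [Module.finrank_pi]
  have hfr2 : Module.finrank ℂ (Matrix (Fin d) (Fin d) ℂ) = d * d := by
    rw [Module.finrank_matrix]
    simp [Module.finrank_self]
  set m := Module.finrank ℂ (LinearMap.ker Tmap) with hmdef
  have hmval : n + m = d * d := by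
    rw [hfr1, hfr2] at hrank
    exact hrank
  have hmle : m + 2 ≤ d := by omega
  -- pick v ≠ 0 orthogonal to x₁ and to all A *ᵥ x₁ for A in the kernel
  set x₁ : Fin d → ℂ := fun i => X i j₀ with hx₁def
  let B : Module.Basis (Fin m) ℂ (LinearMap.ker Tmap) := Module.finBasis ℂ (LinearMap.ker Tmap)
  let dp : (Fin d → ℂ) → ((Fin d → ℂ) →ₗ[ℂ] ℂ) := fun w =>
    { toFun := fun u => w ⬝ᵥ u
      map_add' := fun u₁ u₂ => by simp [dotProduct_add]
      map_smul' := fun c u => by simp [dotProduct_smul, smul_eq_mul] }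
  have hdp : ∀ w u, dp w u = w ⬝ᵥ u := fun _ _ => rfl
  let Lmap : (Fin d → ℂ) →ₗ[ℂ] ℂ × (Fin m → ℂ) :=
    LinearMap.prod (dp (star x₁))
      (LinearMap.pi (fun i => dp (star x₁ ᵥ* ((B i : Matrix (Fin d) (Fin d) ℂ)))))
  have hLex : ∃ v, v ≠ 0 ∧ Lmap v = 0 := by
    by_contra hcon
    push_neg at hcon
    have hinj : Function.Injective Lmap := by
      rw [← LinearMap.ker_eq_bot, Submodule.eq_bot_iff]
      intro u hu
      by_contra hu0
      exact hcon u hu0 hu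
    have hle := LinearMap.finrank_le_finrank_of_injective hinj
    rw [Module.finrank_prod] at hle
    have hfr3 : Module.finrank ℂ (Fin d → ℂ) = d := by simp [Module.finrank_pi]
    have hfr4 : Module.finrank ℂ (Fin m → ℂ) = m := by simp [Module.finrank_pi]
    rw [hfr3, hfr4, Module.finrank_self] at hle
    omega
  obtain ⟨v, hv0, hvL⟩ := hLex
  have hv1 : star x₁ ⬝ᵥ v = 0 := by
    have := congrArg Prod.fst hvL
    simpa [Lmap, hdp] using this
  have hv2 : ∀ i : Fin m, (star x₁ ᵥ* ((B i : Matrix (Fin d) (Fin d) ℂ))) ⬝ᵥ v = 0 := by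
    intro i
    have := congrFun (congrArg Prod.snd hvL) i
    simpa [Lmap, hdp] using this
  -- the pairing functional kills the whole kernel
  have hμ : ∀ A ∈ LinearMap.ker Tmap, (star x₁ ᵥ* A) ⬝ᵥ v = 0 := by
    intro A hA
    let μl : Matrix (Fin d) (Fin d) ℂ →ₗ[ℂ] ℂ :=
      { toFun := fun C => (star x₁ ᵥ* C) ⬝ᵥ v
        map_add' := by
          intro C₁ C₂
          show (star x₁ ᵥ* (C₁ + C₂)) ⬝ᵥ v = (star x₁ ᵥ* C₁) ⬝ᵥ v + (star x₁ ᵥ* C₂) ⬝ᵥ v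
          rw [Matrix.vecMul_add, add_dotProduct]
        map_smul' := by
          intro c C
          show (star x₁ ᵥ* (c • C)) ⬝ᵥ v = (RingHom.id ℂ) c • ((star x₁ ᵥ* C) ⬝ᵥ v)
          have hsm : star x₁ ᵥ* (c • C) = c • (star x₁ ᵥ* C) := by
            funext l
            simp only [Matrix.vecMul, dotProduct, Matrix.smul_apply, Pi.smul_apply,
              smul_eq_mul, Finset.mul_sum]
            exact Finset.sum_congr rfl (fun i _ => by ring)
          rw [hsm, smul_dotProduct]
          simp }
    have hμl : ∀ C, μl C = (star x₁ ᵥ* C) ⬝ᵥ v := fun _ => rfl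
    have hAexp : A = ∑ i, (B.repr ⟨A, hA⟩) i • ((B i : Matrix (Fin d) (Fin d) ℂ)) := by
      have hrepr := B.sum_repr ⟨A, hA⟩
      have h := congrArg (fun (t : ↥(LinearMap.ker Tmap)) => (t : Matrix (Fin d) (Fin d) ℂ)) hrepr
      simp only [AddSubmonoidClass.coe_finset_sum, SetLike.val_smul] at h
      exact h.symm
    calc (star x₁ ᵥ* A) ⬝ᵥ v = μl A := rfl
    _ = μl (∑ i, (B.repr ⟨A, hA⟩) i • ((B i : Matrix (Fin d) (Fin d) ℂ))) := by
        rw [← hAexp]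
    _ = ∑ i, (B.repr ⟨A, hA⟩) i • μl ((B i : Matrix (Fin d) (Fin d) ℂ)) := by
        rw [map_sum]
        exact Finset.sum_congr rfl (fun i _ => map_smul μl _ _)
    _ = 0 := by
        rw [Finset.sum_congr rfl (fun i _ => by rw [hμl, hv2 i, smul_zero])]
        exact Finset.sum_const_zero
  have hkerstar : ∀ A ∈ LinearMap.ker Tmap, Aᴴ ∈ LinearMap.ker Tmap := by
    intro A hA
    rw [LinearMap.mem_ker] at hA ⊢
    have h1 : Xᴴ * Aᴴ * X = (Xᴴ * A * X)ᴴ := by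
      rw [Matrix.conjTranspose_mul, Matrix.conjTranspose_mul,
        Matrix.conjTranspose_conjTranspose, Matrix.mul_assoc]
    funext l
    have h2 : Tmap Aᴴ l = (Xᴴ * Aᴴ * X) l l := hTapp _ _
    rw [h2, h1, Matrix.conjTranspose_apply]
    have h3 : (Xᴴ * A * X) l l = 0 := by
      rw [← hTapp A l, hA]
      rfl
    rw [h3, star_zero]
    rfl
  -- the two special matrices built from v
  set E₁ : Matrix (Fin d) (Fin d) ℂ := Matrix.vecMulVec x₁ (star v) with hE₁def
  set E₂ : Matrix (Fin d) (Fin d) ℂ := Matrix.vecMulVec v (star x₁) with hE₂def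
  set K : Matrix (Fin d) (Fin d) ℂ := E₁ + E₂ with hKdef
  set K' : Matrix (Fin d) (Fin d) ℂ := Complex.I • (E₁ - E₂) with hK'def
  have hv1' : star v ⬝ᵥ x₁ = 0 := by rw [dot_star_swap, hv1, star_zero]
  have hx₁x₁ : star x₁ ⬝ᵥ x₁ = 1 := by
    have hh := hdiag j₀
    rw [hG, Matrix.mul_apply] at hh
    simpa [Matrix.conjTranspose_apply, dotProduct, hx₁def] using hh
  -- trace pairings with kernel elements vanish
  have htrE₁ : ∀ A ∈ LinearMap.ker Tmap, Matrix.trace (A * E₁) = 0 := by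
    intro A hA
    rw [hE₁def, trace_mul_vecMulVec, dot_star_swap, Matrix.star_mulVec,
      hμ Aᴴ (hkerstar A hA), star_zero]
  have htrE₂ : ∀ A ∈ LinearMap.ker Tmap, Matrix.trace (A * E₂) = 0 := by
    intro A hA
    rw [hE₂def, trace_mul_vecMulVec, Matrix.dotProduct_mulVec, hμ A hA]
  have hpairK : ∀ A ∈ LinearMap.ker Tmap, Matrix.trace (A * K) = 0 := by
    intro A hA
    rw [hKdef, Matrix.mul_add, Matrix.trace_add, htrE₁ A hA, htrE₂ A hA, add_zero]
  have hpairK' : ∀ A ∈ LinearMap.ker Tmap, Matrix.trace (A * K') = 0 := by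
    intro A hA
    rw [hK'def, Matrix.mul_smul, Matrix.trace_smul, Matrix.mul_sub, Matrix.trace_sub,
      htrE₁ A hA, htrE₂ A hA]
    simp
  -- traces of K*K and K'*K'
  set Vq : ℂ := star v ⬝ᵥ v with hVqdef
  have hVq0 : Vq ≠ 0 := by
    rw [hVqdef]
    intro hh
    apply hv0
    have hcast : star v ⬝ᵥ v = ((∑ j, Complex.normSq (v j) : ℝ) : ℂ) := by
      push_cast
      simp only [dotProduct, Pi.star_apply, Complex.star_def]
      exact Finset.sum_congr rfl (fun j _ => by
        rw [mul_comm, Complex.mul_conj])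
    rw [hcast] at hh
    have hre : (∑ j, Complex.normSq (v j) : ℝ) = 0 := by exact_mod_cast hh
    have hterm : ∀ j ∈ Finset.univ, Complex.normSq (v j) = 0 := by
      rw [← Finset.sum_eq_zero_iff_of_nonneg (fun j _ => Complex.normSq_nonneg (v j))]
      exact hre
    funext j
    exact Complex.normSq_eq_zero.mp (hterm j (Finset.mem_univ j))
  have hE₁E₁ : E₁ * E₁ = (0 : ℂ) • Matrix.vecMulVec x₁ (star v) := by
    rw [hE₁def, vecMulVec_mul_vecMulVec', hv1']
  have hE₁E₂ : E₁ * E₂ = Vq • Matrix.vecMulVec x₁ (star x₁) := by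
    rw [hE₁def, hE₂def, vecMulVec_mul_vecMulVec', hVqdef]
  have hE₂E₁ : E₂ * E₁ = (1 : ℂ) • Matrix.vecMulVec v (star v) := by
    rw [hE₂def, hE₁def, vecMulVec_mul_vecMulVec', hx₁x₁]
  have hE₂E₂ : E₂ * E₂ = (0 : ℂ) • Matrix.vecMulVec v (star x₁) := by
    rw [hE₂def, vecMulVec_mul_vecMulVec', hv1]
  have htrKK : Matrix.trace (K * K) = 2 * Vq := by
    rw [hKdef, Matrix.add_mul, Matrix.mul_add, Matrix.mul_add]
    rw [hE₁E₁, hE₁E₂, hE₂E₁, hE₂E₂]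
    simp only [Matrix.trace_add, Matrix.trace_smul, trace_vecMulVec', zero_smul,
      Matrix.trace_zero, smul_eq_mul]
    rw [hx₁x₁, hVqdef]
    ring
  have htrK'K' : Matrix.trace (K' * K') = 2 * Vq := by
    have hexp : K' * K' = ((-1 : ℂ)) • ((E₁ - E₂) * (E₁ - E₂)) := by
      rw [hK'def, Matrix.smul_mul, Matrix.mul_smul, smul_smul, Complex.I_mul_I]
    have hexp2 : (E₁ - E₂) * (E₁ - E₂) = (E₁ * E₁ - E₁ * E₂) - (E₂ * E₁ - E₂ * E₂) := by
      rw [Matrix.sub_mul, Matrix.mul_sub, Matrix.mul_sub]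
    rw [hexp, hexp2, hE₁E₁, hE₁E₂, hE₂E₁, hE₂E₂]
    simp only [Matrix.trace_smul, Matrix.trace_sub, Matrix.trace_smul, trace_vecMulVec',
      zero_smul, Matrix.trace_zero, smul_eq_mul]
    rw [hx₁x₁, hVqdef]
    ring
  -- quadratic form of Mm
  have hMdot : ∀ r : Fin n → ℂ, (Mm *ᵥ r) ⬝ᵥ r = β * (r ⬝ᵥ r) - a * (∑ k, r k) ^ 2 := by
    intro r
    have hJr : Jm *ᵥ r = fun _ => ∑ k, r k := by
      funext l
      simp [hJmdef, Matrix.mulVec, dotProduct]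
    rw [hMmdef, Matrix.sub_mulVec, Matrix.smul_mulVec, Matrix.one_mulVec,
      Matrix.smul_mulVec, sub_dotProduct, smul_dotProduct, smul_dotProduct, hJr]
    have hJdot : (fun (_ : Fin n) => ∑ k, r k) ⬝ᵥ r = (∑ k, r k) ^ 2 := by
      simp only [dotProduct]
      rw [← Finset.mul_sum]
      ring
    rw [hJdot]
    simp only [smul_eq_mul]
  -- the key identity for matrices that pair to zero with the kernel
  have main : ∀ Kc : Matrix (Fin d) (Fin d) ℂ,
      (∀ A ∈ LinearMap.ker Tmap, Matrix.trace (A * Kc) = 0) →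
      (((1 : ℂ) - a) * β) * Matrix.trace (Kc * Kc)
        = β * (Tmap Kc ⬝ᵥ Tmap Kc) - a * (∑ l, Tmap Kc l) ^ 2 := by
    intro Kc hKc
    obtain ⟨r, hrdef⟩ : ∃ r, Tmap Kc = r := ⟨_, rfl⟩
    obtain ⟨c, hcdef⟩ : ∃ c, Mm *ᵥ r = c := ⟨_, rfl⟩
    rw [hrdef]
    have hDker : (((1 : ℂ) - a) * β) • Kc - X * Matrix.diagonal c * Xᴴ
        ∈ LinearMap.ker Tmap := by
      rw [LinearMap.mem_ker, map_sub, LinearMap.map_smul, hTdiag, hrdef, ← hcdef,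
        Matrix.mulVec_mulVec, hΦM, Matrix.smul_mulVec, Matrix.one_mulVec]
      exact sub_self _
    have e1 : Matrix.trace ((X * Matrix.diagonal c * Xᴴ) * Kc) = c ⬝ᵥ r := by
      have h1 : (X * Matrix.diagonal c * Xᴴ) * Kc = X * (Matrix.diagonal c * Xᴴ * Kc) := by
        simp only [Matrix.mul_assoc]
      rw [h1, Matrix.trace_mul_comm]
      have h2 : Matrix.diagonal c * Xᴴ * Kc * X = Matrix.diagonal c * (Xᴴ * Kc * X) := by
        simp only [Matrix.mul_assoc]
      rw [h2]
      have h3 : Matrix.trace (Matrix.diagonal c * (Xᴴ * Kc * X))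
          = ∑ l, c l * (Xᴴ * Kc * X) l l := by
        simp [Matrix.trace, Matrix.diag, Matrix.diagonal_mul]
      rw [h3]
      simp only [dotProduct]
      refine Finset.sum_congr rfl (fun l _ => ?_)
      rw [← hTapp Kc l, hrdef]
    have e0 : Matrix.trace ((((1 : ℂ) - a) * β) • Kc * Kc)
        = (((1 : ℂ) - a) * β) * Matrix.trace (Kc * Kc) := by
      rw [Matrix.smul_mul, Matrix.trace_smul, smul_eq_mul]
    have e2 : (((1 : ℂ) - a) * β) • Kc * Kc
        = ((((1 : ℂ) - a) * β) • Kc - X * Matrix.diagonal c * Xᴴ) * Kc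
          + (X * Matrix.diagonal c * Xᴴ) * Kc := by
      rw [Matrix.sub_mul]
      rw [sub_add_cancel]
    calc (((1 : ℂ) - a) * β) * Matrix.trace (Kc * Kc)
        = Matrix.trace ((((1 : ℂ) - a) * β) • Kc * Kc) := e0.symm
    _ = Matrix.trace (((((1 : ℂ) - a) * β) • Kc - X * Matrix.diagonal c * Xᴴ) * Kc)
          + Matrix.trace ((X * Matrix.diagonal c * Xᴴ) * Kc) := by
        rw [e2, Matrix.trace_add]
    _ = 0 + c ⬝ᵥ r := by rw [hKc _ hDker, e1]
    _ = β * (r ⬝ᵥ r) - a * (∑ l, r l) ^ 2 := by rw [zero_add, ← hcdef, hMdot r]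
  -- entrywise formulas for Tmap K and Tmap K'
  set g : Fin n → ℂ := Xᴴ *ᵥ x₁ with hgdef
  set z : Fin n → ℂ := Xᴴ *ᵥ v with hzdef
  have hstarz : star v ᵥ* X = fun l => star (z l) := by
    have h1 : star (Xᴴ *ᵥ v) = star v ᵥ* X := by
      rw [Matrix.star_mulVec, Matrix.conjTranspose_conjTranspose]
    rw [← h1, ← hzdef]
    funext l
    simp
  have hstarg : star x₁ ᵥ* X = fun l => star (g l) := by
    have h1 : star (Xᴴ *ᵥ x₁) = star x₁ ᵥ* X := by
      rw [Matrix.star_mulVec, Matrix.conjTranspose_conjTranspose]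
    rw [← h1, ← hgdef]
    funext l
    simp
  have hTE₁ : ∀ l, Tmap E₁ l = g l * star (z l) := by
    intro l
    rw [hTapp, hE₁def, sandwich_vecMulVec, hstarz, ← hgdef]
  have hTE₂ : ∀ l, Tmap E₂ l = z l * star (g l) := by
    intro l
    rw [hTapp, hE₂def, sandwich_vecMulVec, hstarg, ← hzdef]
  have hrK : ∀ l, Tmap K l = g l * star (z l) + z l * star (g l) := by
    intro l
    rw [hKdef, map_add, Pi.add_apply, hTE₁ l, hTE₂ l]
  have hrK' : ∀ l, Tmap K' l
      = Complex.I * (g l * star (z l) - z l * star (g l)) := by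
    intro l
    rw [hK'def, LinearMap.map_smul, Pi.smul_apply, map_sub, Pi.sub_apply, hTE₁ l, hTE₂ l,
      smul_eq_mul]
  -- summation identities
  have hzXX : ∀ w u : Fin d → ℂ, (star w ᵥ* X) ⬝ᵥ (Xᴴ *ᵥ u) = β * (star w ⬝ᵥ u) := by
    intro w u
    rw [← Matrix.dotProduct_mulVec, Matrix.mulVec_mulVec, hXX, Matrix.smul_mulVec,
      Matrix.one_mulVec, dotProduct_smul, smul_eq_mul]
  have hzz : ∑ l, z l * star (z l) = β * Vq := by
    have h1 := hzXX v v
    rw [hstarz, ← hzdef, ← hVqdef] at h1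
    rw [← h1]
    simp [dotProduct, mul_comm]
  have hsum_gz : ∑ l, g l * star (z l) = 0 := by
    have h1 := hzXX v x₁
    rw [hstarz, ← hgdef, hv1'] at h1
    rw [mul_zero] at h1
    rw [← h1]
    simp [dotProduct, mul_comm]
  have hsum_zg : ∑ l, z l * star (g l) = 0 := by
    have h1 := hzXX x₁ v
    rw [hstarg, ← hzdef, hv1] at h1
    rw [mul_zero] at h1
    rw [← h1]
    simp [dotProduct, mul_comm]
  have hsumK : ∑ l, Tmap K l = 0 := by
    rw [Finset.sum_congr rfl (fun l _ => hrK l), Finset.sum_add_distrib, hsum_gz, hsum_zg,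
      add_zero]
  have hsumK' : ∑ l, Tmap K' l = 0 := by
    rw [Finset.sum_congr rfl (fun l _ => hrK' l), ← Finset.mul_sum,
      Finset.sum_sub_distrib, hsum_gz, hsum_zg, sub_zero, mul_zero]
  have hdotK : Tmap K ⬝ᵥ Tmap K = ∑ l, (g l * star (z l) + z l * star (g l)) ^ 2 := by
    simp only [dotProduct]
    exact Finset.sum_congr rfl (fun l _ => by rw [hrK l]; ring)
  have hdotK' : Tmap K' ⬝ᵥ Tmap K'
      = ∑ l, (Complex.I * (g l * star (z l) - z l * star (g l))) ^ 2 := by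
    simp only [dotProduct]
    exact Finset.sum_congr rfl (fun l _ => by rw [hrK' l]; ring)
  have hpoint : ∀ l, (g l * star (z l) + z l * star (g l)) ^ 2
      + (Complex.I * (g l * star (z l) - z l * star (g l))) ^ 2
      = 4 * ((g l * star (g l)) * (z l * star (z l))) := by
    intro l
    have hI : Complex.I ^ 2 = -1 := Complex.I_sq
    calc (g l * star (z l) + z l * star (g l)) ^ 2
        + (Complex.I * (g l * star (z l) - z l * star (g l))) ^ 2
        = (g l * star (z l) + z l * star (g l)) ^ 2
          + Complex.I ^ 2 * (g l * star (z l) - z l * star (g l)) ^ 2 := by ring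
    _ = (g l * star (z l) + z l * star (g l)) ^ 2
          + (-1) * (g l * star (z l) - z l * star (g l)) ^ 2 := by rw [hI]
    _ = 4 * ((g l * star (g l)) * (z l * star (z l))) := by ring
  have hgval : ∀ l, g l = G l j₀ := by
    intro l
    simp [hgdef, hG, Matrix.mulVec, Matrix.mul_apply, dotProduct, hx₁def]
  have hzj₀ : z j₀ = 0 := by
    have h1 : z j₀ = star x₁ ⬝ᵥ v := by
      simp [hzdef, Matrix.mulVec, dotProduct, Matrix.conjTranspose_apply, hx₁def]
    rw [h1, hv1]
  have hsum4 : ∑ l, 4 * ((g l * star (g l)) * (z l * star (z l)))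
      = 4 * (a * (β * Vq)) := by
    rw [← Finset.add_sum_erase _ _ (Finset.mem_univ j₀)]
    have hterm0 : 4 * ((g j₀ * star (g j₀)) * (z j₀ * star (z j₀))) = 0 := by
      rw [hzj₀]
      simp
    rw [hterm0, zero_add]
    have hrest : ∀ l ∈ Finset.univ.erase j₀,
        4 * ((g l * star (g l)) * (z l * star (z l)))
          = (4 * (a : ℂ)) * (z l * star (z l)) := by
      intro l hl
      rw [hgval l, hoffC l j₀ (Finset.mem_erase.mp hl).1]
      ring
    rw [Finset.sum_congr rfl hrest, ← Finset.mul_sum]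
    have herase : ∑ l ∈ Finset.univ.erase j₀, z l * star (z l) = β * Vq := by
      have h5 : ∑ l ∈ Finset.univ.erase j₀, z l * star (z l)
          = (∑ l, z l * star (z l)) - z j₀ * star (z j₀) :=
        Finset.sum_erase_eq_sub (Finset.mem_univ j₀)
      rw [h5, hzz, hzj₀]
      simp
    rw [herase]
    ring
  -- assemble
  have hKmain := main K hpairK
  have hK'main := main K' hpairK'
  rw [htrKK, hdotK, hsumK] at hKmain
  rw [htrK'K', hdotK', hsumK'] at hK'main
  have hsums : (∑ l, (g l * star (z l) + z l * star (g l)) ^ 2)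
      + (∑ l, (Complex.I * (g l * star (z l) - z l * star (g l))) ^ 2)
      = 4 * (a * (β * Vq)) := by
    rw [← Finset.sum_add_distrib, Finset.sum_congr rfl (fun l _ => hpoint l), hsum4]
  have hcomb : (((1 : ℂ) - a) * β) * (2 * Vq) + (((1 : ℂ) - a) * β) * (2 * Vq)
      = β * (4 * (a * (β * Vq))) := by
    linear_combination hKmain + hK'main + (β : ℂ) * hsums
  have hfin : (1 : ℂ) - a = (a : ℂ) * β := by
    have h4 : (4 : ℂ) * ((β : ℂ) * Vq) ≠ 0 :=
      mul_ne_zero (by norm_num) (mul_ne_zero hβC0 hVq0)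
    have h5 : (((1 : ℂ) - a) - (a : ℂ) * β) * (4 * ((β : ℂ) * Vq)) = 0 := by
      linear_combination hcomb
    rcases mul_eq_zero.mp h5 with h6 | h6
    · linear_combination h6
    · exact absurd h6 h4
  have h5 : (a : ℂ) * ((β : ℂ) + 1) = 1 := by linear_combination -hfin
  have h7 : (β : ℂ) - 1 = ((n : ℂ) - 1) * (a : ℂ) := by linear_combination -hrow
  have h8 : (β : ℂ) ^ 2 = (n : ℂ) := by
    have h9 : ((β : ℂ) - 1) * ((β : ℂ) + 1) = ((n : ℂ) - 1) * ((a : ℂ) * ((β : ℂ) + 1)) := by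
      rw [h7]
      ring
    rw [h5, mul_one] at h9
    linear_combination h9
  have h10 : (n : ℂ) * (n : ℂ) = (n : ℂ) * ((d : ℂ) * (d : ℂ)) := by
    calc (n : ℂ) * (n : ℂ) = ((β : ℂ) * d) * ((β : ℂ) * d) := by rw [hβdC]
    _ = (β : ℂ) ^ 2 * ((d : ℂ) * (d : ℂ)) := by ring
    _ = (n : ℂ) * ((d : ℂ) * (d : ℂ)) := by rw [h8]
  have hn0C : (n : ℂ) ≠ 0 := Nat.cast_ne_zero.mpr hn0.ne'
  have h11 : (n : ℂ) = (d : ℂ) * (d : ℂ) := mul_left_cancel₀ hn0C h10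
  have h12 : n = d * d := by exact_mod_cast h11
  omega
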